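/- Let d,m ∈ ℕ, T ∈ [0,∞), ξ ∈ ℝ^d, σ ∈ ℝ^{d×m}, φ ∈ C(ℝ^m,[0,∞)), V ∈ C¹(ℝ^d,[0,∞)), w ∈ C([0,T],ℝ^m), let ‖·‖ be a norm on ℝ^d, let μ: ℝ^d → ℝ^d be a locally Lipschitz continuous function, and assume for all x ∈ ℝ^d and z ∈ ℝ^m that V'(x)μ(x+σz) ≤ φ(z)V(x) and ‖x‖ ≤ V(x). Then there exists a unique y ∈ C([0,T],ℝ^d) such that for all t ∈ [0,T] it holds that y(t) = ξ + ∫₀^t μ(y(s)) ds + σw(t). -/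

import Mathlib

open MeasureTheory ProbabilityTheory Filter
open scoped ENNReal NNReal

noncomputable section

open Set
open scoped Topology

/-- `N` is a norm on the real vector space `E`. -/
def IsNorm {E : Type*} [AddCommGroup E] [Module ℝ E] (N : E → ℝ) : Prop :=
  (∀ x, N x = 0 ↔ x = 0) ∧ (∀ (a : ℝ) (x : E), N (a • x) = |a| * N x) ∧
    ∀ x y, N (x + y) ≤ N x + N y

lemma isNorm_nonneg {E : Type*} [AddCommGroup E] [Module ℝ E] {N : E → ℝ}
    (hN : IsNorm N) (x : E) : 0 ≤ N x := by
  have h1 : N (x + (-1 : ℝ) • x) ≤ N x + N ((-1 : ℝ) • x) := hN.2.2 x _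
  have h2 : N ((-1:ℝ) • x) = N x := by rw [hN.2.1]; simp
  have h3 : x + (-1:ℝ) • x = 0 := by simp
  have h0 : N 0 = 0 := (hN.1 0).mpr rfl
  rw [h3, h0, h2] at h1
  linarith

lemma isNorm_lipschitz {d : ℕ} {N : (Fin d → ℝ) → ℝ} (hN : IsNorm N) :
    ∃ K : ℝ, 0 ≤ K ∧ ∀ x : Fin d → ℝ, N x ≤ K * ‖x‖ := by
  refine ⟨∑ i, N (Pi.single i 1), Finset.sum_nonneg fun i _ => isNorm_nonneg hN _, fun x => ?_⟩
  have hx : x = ∑ i, x i • (Pi.single i 1 : Fin d → ℝ) := by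
    ext j; simp [Pi.single_apply]
  calc N x = N (∑ i, x i • (Pi.single i 1 : Fin d → ℝ)) := by rw [← hx]
    _ ≤ ∑ i, N (x i • (Pi.single i 1 : Fin d → ℝ)) :=
        Finset.le_sum_of_subadditive N ((hN.1 0).mpr rfl).le hN.2.2 _ _
    _ ≤ ∑ i, ‖x‖ * N (Pi.single i 1) := by
        refine Finset.sum_le_sum fun i _ => ?_
        rw [hN.2.1]
        have h1 : |x i| ≤ ‖x‖ := by
          have := norm_le_pi_norm x i; rwa [Real.norm_eq_abs] at this
        exact mul_le_mul_of_nonneg_right h1 (isNorm_nonneg hN _)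
    _ = (∑ i, N (Pi.single i 1)) * ‖x‖ := by rw [← Finset.mul_sum, mul_comm]

lemma isNorm_comparison {d : ℕ} (hd : 0 < d) {N : (Fin d → ℝ) → ℝ} (hN : IsNorm N) :
    ∃ c : ℝ, 0 < c ∧ ∀ x : Fin d → ℝ, ‖x‖ ≤ c * N x := by
  obtain ⟨K, hK0, hK⟩ := isNorm_lipschitz hN
  -- N is continuous
  have hcont : Continuous N := by
    rw [Metric.continuous_iff]
    intro x ε hε
    rcases le_or_gt K 0 with hK' | hK'
    · refine ⟨1, one_pos, fun y _ => ?_⟩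
      have h1 : N (y - x + x) ≤ N (y - x) + N x := hN.2.2 _ _
      have h2 : N (x - y + y) ≤ N (x - y) + N y := hN.2.2 _ _
      simp only [sub_add_cancel] at h1 h2
      have h3 : N (y - x) ≤ K * ‖y - x‖ := hK _
      have h4 : N (x - y) ≤ K * ‖x - y‖ := hK _
      have h5 : K * ‖y - x‖ ≤ 0 := mul_nonpos_of_nonpos_of_nonneg hK' (norm_nonneg _)
      have h6 : K * ‖x - y‖ ≤ 0 := mul_nonpos_of_nonpos_of_nonneg hK' (norm_nonneg _)
      rw [Real.dist_eq, abs_lt]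
      constructor <;> nlinarith
    · refine ⟨ε / K, div_pos hε hK', fun y hy => ?_⟩
      have h1 : N y ≤ N x + N (y - x) := by
        have := hN.2.2 x (y - x); simpa using this
      have h2 : N x ≤ N y + N (x - y) := by
        have := hN.2.2 y (x - y); simpa using this
      have h3 : N (y - x) ≤ K * ‖y - x‖ := hK _
      have h4 : N (x - y) ≤ K * ‖x - y‖ := hK _
      have h5 : ‖y - x‖ = dist y x := (dist_eq_norm y x).symm
      have h6 : ‖x - y‖ = dist y x := by rw [dist_comm]; exact (dist_eq_norm x y).symm
      rw [Real.dist_eq, abs_lt]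
      have h7 : K * dist y x < ε := by
        have := (lt_div_iff₀ hK').mp hy; linarith [mul_comm K (dist y x)]
      constructor <;> nlinarith
  haveI : Nonempty (Fin d) := Fin.pos_iff_nonempty.mp hd
  have hsne : (Metric.sphere (0 : Fin d → ℝ) 1).Nonempty :=
    NormedSpace.sphere_nonempty.mpr zero_le_one
  obtain ⟨z, hz, hzmin'⟩ := (isCompact_sphere (0 : Fin d → ℝ) 1).exists_isMinOn hsne
    hcont.continuousOn
  have hzmin := isMinOn_iff.mp hzmin'
  have hz1 : ‖z‖ = 1 := by simpa using hz
  have hzne : z ≠ 0 := by intro h; rw [h] at hz1; simp at hz1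
  have hε : 0 < N z := by
    rcases lt_or_eq_of_le (isNorm_nonneg hN z) with h | h
    · exact h
    · exact absurd ((hN.1 z).mp h.symm) hzne
  refine ⟨(N z)⁻¹, inv_pos.mpr hε, fun x => ?_⟩
  rcases eq_or_ne x 0 with rfl | hx
  · simp [(hN.1 0).mpr rfl]
  · have hxn : 0 < ‖x‖ := norm_pos_iff.mpr hx
    have hu : (‖x‖⁻¹ • x) ∈ Metric.sphere (0 : Fin d → ℝ) 1 := by
      simp [norm_smul, abs_of_pos (inv_pos.mpr hxn), inv_mul_cancel₀ hxn.ne']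
    have h1 : N z ≤ N (‖x‖⁻¹ • x) := hzmin _ hu
    have h2 : N (‖x‖⁻¹ • x) = ‖x‖⁻¹ * N x := by
      rw [hN.2.1]; rw [abs_of_pos (inv_pos.mpr hxn)]
    rw [h2] at h1
    have := mul_le_mul_of_nonneg_left h1 hxn.le
    rw [← mul_assoc, mul_inv_cancel₀ hxn.ne', one_mul] at this
    calc ‖x‖ = (N z)⁻¹ * (‖x‖ * N z) := by field_simp
      _ ≤ (N z)⁻¹ * N x := mul_le_mul_of_nonneg_left this (inv_pos.mpr hε).le

lemma clamp_lipschitz (B : ℝ) :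
    LipschitzWith 1 (fun a : ℝ => max (-B) (min B a)) := by
  apply LipschitzWith.of_dist_le_mul
  intro a b
  rw [NNReal.coe_one, one_mul, Real.dist_eq, Real.dist_eq]
  calc |max (-B) (min B a) - max (-B) (min B b)|
      = |max (min B a) (-B) - max (min B b) (-B)| := by rw [max_comm (-B), max_comm (-B)]
    _ ≤ |min B a - min B b| := abs_max_sub_max_le_abs _ _ _
    _ ≤ max |B - B| |a - b| := abs_min_sub_min_le_max _ _ _ _
    _ = |a - b| := by rw [sub_self, abs_zero]; exact max_eq_right (abs_nonneg _)

lemma lipschitz_bounded_extension {d : ℕ} {μ : (Fin d → ℝ) → (Fin d → ℝ)}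
    {S : Set (Fin d → ℝ)} {L : ℝ≥0} {B : ℝ} (hB : 0 ≤ B)
    (hlip : LipschitzOnWith L μ S) (hbd : ∀ v ∈ S, ‖μ v‖ ≤ B) :
    ∃ ν : (Fin d → ℝ) → (Fin d → ℝ),
      LipschitzWith L ν ∧ (∀ x, ‖ν x‖ ≤ B) ∧ Set.EqOn ν μ S := by
  have hcoord : ∀ i : Fin d, LipschitzOnWith L (fun x => μ x i) S := by
    intro i
    rw [lipschitzOnWith_iff_dist_le_mul]
    intro x hx y hy
    exact le_trans (dist_le_pi_dist (μ x) (μ y) i)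
      ((lipschitzOnWith_iff_dist_le_mul.mp hlip) x hx y hy)
  choose g hg hge using fun i => (hcoord i).extend_real
  set ν : (Fin d → ℝ) → (Fin d → ℝ) := fun x i => max (-B) (min B (g i x)) with hν
  refine ⟨ν, ?_, ?_, ?_⟩
  · apply LipschitzWith.of_dist_le_mul
    intro x y
    rcases dist_nonneg (x := x) (y := y) with h
    rw [dist_pi_le_iff (by positivity)]
    intro i
    calc dist (ν x i) (ν y i) ≤ 1 * dist (g i x) (g i y) :=
          (clamp_lipschitz B).dist_le_mul _ _
      _ = dist (g i x) (g i y) := one_mul _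
      _ ≤ L * dist x y := (hg i).dist_le_mul _ _
  · intro x
    rw [pi_norm_le_iff_of_nonneg hB]
    intro i
    rw [Real.norm_eq_abs, abs_le]
    exact ⟨le_max_left _ _, max_le (by linarith) (min_le_left _ _)⟩
  · intro v hv
    have hgv : ∀ i, g i v = μ v i := fun i => (hge i hv).symm
    funext i
    have habs : |μ v i| ≤ B := le_trans (by
      have := norm_le_pi_norm (μ v) i; rwa [Real.norm_eq_abs] at this) (hbd v hv)
    rw [abs_le] at habs
    show max (-B) (min B (g i v)) = μ v i
    rw [hgv i, min_eq_right habs.2, max_eq_right habs.1]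

lemma locally_lipschitz_continuous {d : ℕ} {μ : (Fin d → ℝ) → (Fin d → ℝ)}
    (hμ : ∀ s : Set (Fin d → ℝ), Bornology.IsBounded s →
      ∃ L : ℝ≥0, LipschitzOnWith L μ s) : Continuous μ := by
  rw [continuous_iff_continuousAt]
  intro x
  obtain ⟨L, hL⟩ := hμ (Metric.closedBall x 1) Metric.isBounded_closedBall
  exact hL.continuousOn.continuousAt (Metric.closedBall_mem_nhds x one_pos)

lemma gronwall_V {d : ℕ} {V : (Fin d → ℝ) → ℝ} (hV : ContDiff ℝ 1 V)
    {x F : ℝ → (Fin d → ℝ)} {C b : ℝ}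
    (hx : ContinuousOn x (Set.Icc 0 b))
    (hx' : ∀ t ∈ Set.Ico (0:ℝ) b, HasDerivWithinAt x (F t) (Set.Ici t) t)
    (hbound : ∀ t ∈ Set.Ico (0:ℝ) b, fderiv ℝ V (x t) (F t) ≤ C * V (x t)) :
    ∀ t ∈ Set.Icc (0:ℝ) b, V (x t) ≤ V (x 0) * Real.exp (C * t) := by
  intro t ht
  have key := le_gronwallBound_of_liminf_deriv_right_le
    (f := fun s => V (x s)) (f' := fun s => fderiv ℝ V (x s) (F s))
    (δ := V (x 0)) (K := C) (ε := 0) (a := 0) (b := b)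
    (hV.continuous.comp_continuousOn hx)
    (fun s hs r hr => ?_) le_rfl (fun s hs => by simpa using hbound s hs) t ht
  · rwa [gronwallBound_ε0, sub_zero] at key
  · have hd : HasDerivWithinAt (fun s => V (x s)) (fderiv ℝ V (x s) (F s)) (Set.Ici s) s :=
      (((hV.differentiable one_ne_zero) (x s)).hasFDerivAt).comp_hasDerivWithinAt s (hx' s hs)
    have := hd.liminf_right_slope_le hr
    apply this.mono
    intro z hz
    rwa [slope_def_field, div_eq_inv_mul] at hz

/-- **Lemma (existence and uniqueness of solutions of perturbed ODEs under a
Lyapunov-type condition).** -/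
theorem perturbed_ode_existence_uniqueness
    (d m : ℕ) (hd : 0 < d) (hm : 0 < m) (T : ℝ) (hT : 0 ≤ T)
    (ξ : Fin d → ℝ)
    (σ : Matrix (Fin d) (Fin m) ℝ)
    (φ : (Fin m → ℝ) → ℝ) (hφc : Continuous φ) (hφ0 : ∀ z, 0 ≤ φ z)
    (V : (Fin d → ℝ) → ℝ) (hV : ContDiff ℝ 1 V) (hV0 : ∀ x, 0 ≤ V x)
    (w : ℝ → (Fin m → ℝ)) (hwc : ContinuousOn w (Set.Icc (0 : ℝ) T))
    (Nd : (Fin d → ℝ) → ℝ) (hNd : IsNorm Nd)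
    (μ : (Fin d → ℝ) → (Fin d → ℝ))
    (hμ : ∀ s : Set (Fin d → ℝ), Bornology.IsBounded s →
      ∃ L : ℝ≥0, LipschitzOnWith L μ s)
    (hLyap : ∀ (x : Fin d → ℝ) (z : Fin m → ℝ),
      fderiv ℝ V x (μ (x + σ.mulVec z)) ≤ φ z * V x)
    (hNV : ∀ x, Nd x ≤ V x) :
    ∃ y : ℝ → (Fin d → ℝ),
      (ContinuousOn y (Set.Icc (0 : ℝ) T) ∧
        ∀ t ∈ Set.Icc (0 : ℝ) T,
          y t = ξ + (∫ s in (0 : ℝ)..t, μ (y s)) + σ.mulVec (w t)) ∧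
      ∀ z : ℝ → (Fin d → ℝ),
        (ContinuousOn z (Set.Icc (0 : ℝ) T) ∧
          ∀ t ∈ Set.Icc (0 : ℝ) T,
            z t = ξ + (∫ s in (0 : ℝ)..t, μ (z s)) + σ.mulVec (w t)) →
        Set.EqOn z y (Set.Icc (0 : ℝ) T) := by
  obtain ⟨c, hc0, hc'⟩ := isNorm_comparison hd hNd
  have hc : ∀ x : Fin d → ℝ, ‖x‖ ≤ c * V x := fun x =>
    le_trans (hc' x) (mul_le_mul_of_nonneg_left (hNV x) hc0.le)
  have hμcont : Continuous μ := locally_lipschitz_continuous hμ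
  -- extension of w
  set w' : ℝ → (Fin m → ℝ) := Set.IccExtend hT ((Set.Icc (0:ℝ) T).restrict w) with hw'def
  have hw'c : Continuous w' := (continuousOn_iff_continuous_restrict.mp hwc).Icc_extend'
  have hw'eq : ∀ t ∈ Set.Icc (0:ℝ) T, w' t = w t := fun t ht => by
    rw [hw'def, Set.IccExtend_of_mem hT _ ht]; rfl
  have hw'proj : ∀ t : ℝ, w' t = w' ((Set.projIcc 0 T hT t : Set.Icc (0:ℝ) T) : ℝ) := by
    intro t
    rw [hw'def, Set.IccExtend_val]
    rfl
  -- the perturbation u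
  set u : ℝ → (Fin d → ℝ) := fun t => σ.mulVec (w' t) with hudef
  have hu : Continuous u := by
    have h1 : Continuous (σ.mulVecLin) := LinearMap.continuous_of_finiteDimensional _
    have : u = fun t => σ.mulVecLin (w' t) := by
      funext t; rw [hudef]; simp [Matrix.mulVecLin_apply]
    rw [this]; exact h1.comp hw'c
  have hu_proj : ∀ t : ℝ, u t = u ((Set.projIcc 0 T hT t : Set.Icc (0:ℝ) T) : ℝ) := fun t => by
    rw [hudef]; simp only; rw [← hw'proj t]
  -- bound W on u
  obtain ⟨W0, hW0⟩ := ((isCompact_Icc.image hu).isBounded).exists_norm_le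
  set W : ℝ := max W0 0 with hWdef
  have hW : ∀ t : ℝ, ‖u t‖ ≤ W := fun t => by
    rw [hu_proj t]
    exact le_trans (hW0 _ (Set.mem_image_of_mem u (Set.projIcc 0 T hT t).2))
      (le_max_left _ _)
  have hWnn : 0 ≤ W := le_max_right _ _
  -- bound C on φ ∘ w'
  obtain ⟨t₀, ht₀, hCmax⟩ := isCompact_Icc.exists_isMaxOn (Set.nonempty_Icc.mpr hT)
    ((hφc.comp hw'c).continuousOn)
  set C : ℝ := φ (w' t₀) with hCdef
  have hC0 : 0 ≤ C := hφ0 _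
  have hCle : ∀ t : ℝ, φ (w' t) ≤ C := fun t => by
    rw [hw'proj t]
    exact (isMaxOn_iff.mp hCmax) _ (Set.projIcc 0 T hT t).2
  -- the a priori bound
  set M : ℝ := V ξ * Real.exp (C * T) with hMdef
  have hM0 : 0 ≤ M := mul_nonneg (hV0 _) (Real.exp_pos _).le
  have hVM : ∀ x : Fin d → ℝ, V x ≤ M → ‖x‖ ≤ c * M := fun x h =>
    le_trans (hc x) (mul_le_mul_of_nonneg_left h hc0.le)
  have hξM : V ξ ≤ M := by
    rw [hMdef]
    nlinarith [Real.one_le_exp (mul_nonneg hC0 hT), hV0 ξ]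
  set R : ℝ := c * M + 1 with hRdef
  set ρ : ℝ := R + W with hρdef
  have hρ0 : 0 ≤ ρ := by positivity
  set S : Set (Fin d → ℝ) := Metric.closedBall 0 ρ with hSdef
  obtain ⟨L, hL⟩ := hμ S Metric.isBounded_closedBall
  obtain ⟨B0, hB0⟩ := ((isCompact_closedBall (0 : Fin d → ℝ) ρ).image_of_continuousOn
    hμcont.continuousOn).isBounded.exists_norm_le
  set B : ℝ := max B0 0 with hBdef
  have hBnn : 0 ≤ B := le_max_right _ _
  have hμB : ∀ v ∈ S, ‖μ v‖ ≤ B := fun v hv =>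
    le_trans (hB0 _ (Set.mem_image_of_mem μ hv)) (le_max_left _ _)
  obtain ⟨ν, hνlip, hνB, hνeq⟩ := lipschitz_bounded_extension hBnn hL hμB
  have hνcont : Continuous ν := hνlip.continuous
  -- the Lipschitz vector field
  have hvlip : ∀ t : ℝ, LipschitzWith L (fun x => ν (x + u t)) := by
    intro t
    apply LipschitzWith.of_dist_le_mul
    intro x y
    calc dist (ν (x + u t)) (ν (y + u t)) ≤ L * dist (x + u t) (y + u t) :=
          hνlip.dist_le_mul _ _
      _ = L * dist x y := by rw [dist_add_right]
  -- Picard-Lindelöf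
  have hpl : IsPicardLindelof (fun t x => ν (x + u t)) (tmin := 0) (tmax := T)
      ⟨0, Set.left_mem_Icc.mpr hT⟩ ξ (⟨B, hBnn⟩ * ⟨T, hT⟩) 0 ⟨B, hBnn⟩ L := by
    refine ⟨fun t _ => (hvlip t).lipschitzOnWith,
      fun x _ => (hνcont.comp (continuous_const.add hu)).continuousOn, 
      fun t _ x _ => hνB _, ?_⟩
    simp [max_eq_left hT]
    exact le_rfl
  obtain ⟨α, hα0', hαd⟩ := hpl.exists_eq_forall_mem_Icc_hasDerivWithinAt (x := ξ) (by simp)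
  have hα0 : α 0 = ξ := hα0'
  have hαc : ContinuousOn α (Set.Icc 0 T) := fun t ht => (hαd t ht).continuousWithinAt
  have hαd' : ∀ t ∈ Set.Ico (0:ℝ) T, HasDerivWithinAt α (ν (α t + u t)) (Set.Ici t) t :=
    fun t ht => (hαd t (Set.Ico_subset_Icc_self ht)).mono_of_mem_nhdsWithin
      (Icc_mem_nhdsGE_of_mem ht)
  -- helper: membership in S
  have hmemS : ∀ (x : Fin d → ℝ) (t : ℝ), ‖x‖ ≤ R → x + u t ∈ S := by
    intro x t hx
    rw [hSdef, mem_closedBall_zero_iff]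
    calc ‖x + u t‖ ≤ ‖x‖ + ‖u t‖ := norm_add_le _ _
      _ ≤ R + W := add_le_add hx (hW t)
  -- Gronwall for a generic solution of the μ-equation on [0,b]
  have hgron : ∀ (x : ℝ → Fin d → ℝ) (b : ℝ), b ≤ T → ContinuousOn x (Set.Icc 0 b) →
      x 0 = ξ →
      (∀ t ∈ Set.Ico (0:ℝ) b, HasDerivWithinAt x (μ (x t + u t)) (Set.Ici t) t) →
      ∀ t ∈ Set.Icc (0:ℝ) b, ‖x t‖ ≤ c * M := by
    intro x b hbT hxc hx0 hx' t ht
    have hbound : ∀ s ∈ Set.Ico (0:ℝ) b,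
        fderiv ℝ V (x s) (μ (x s + u s)) ≤ C * V (x s) := by
      intro s _
      calc fderiv ℝ V (x s) (μ (x s + u s)) ≤ φ (w' s) * V (x s) := hLyap (x s) (w' s)
        _ ≤ C * V (x s) := mul_le_mul_of_nonneg_right (hCle s) (hV0 _)
    have key := gronwall_V hV hxc hx' hbound t ht
    apply hVM
    rw [hx0] at key
    calc V (x t) ≤ V ξ * Real.exp (C * t) := key
      _ ≤ V ξ * Real.exp (C * T) :=
          mul_le_mul_of_nonneg_left (Real.exp_le_exp.mpr
            (mul_le_mul_of_nonneg_left (le_trans ht.2 hbT) hC0)) (hV0 ξ)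
      _ ≤ M := le_of_eq hMdef.symm
  -- exit time argument: α stays in the ball of radius c*M
  have hξcM : ‖ξ‖ ≤ c * M := hVM ξ hξM
  have hcMR : c * M ≤ R := by rw [hRdef]; linarith
  set A : Set ℝ := {t | t ∈ Set.Icc (0:ℝ) T ∧ ∀ s ∈ Set.Icc (0:ℝ) t, ‖α s‖ ≤ R} with hAdef
  have h0A : (0:ℝ) ∈ A := by
    refine ⟨Set.left_mem_Icc.mpr hT, fun s hs => ?_⟩
    have hs0 : s = 0 := le_antisymm hs.2 hs.1
    rw [hs0, hα0]; linarith
  have hAbdd : BddAbove A := ⟨T, fun t ht => ht.1.2⟩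
  set τ := sSup A with hτdef
  have hτT : τ ≤ T := csSup_le ⟨0, h0A⟩ (fun t ht => ht.1.2)
  have hτ0 : 0 ≤ τ := le_csSup hAbdd h0A
  have hclaim1 : ∀ s, 0 ≤ s → s < τ → ‖α s‖ ≤ R := by
    intro s hs0 hsτ
    obtain ⟨t, htA, hst⟩ := exists_lt_of_lt_csSup ⟨0, h0A⟩ hsτ
    exact htA.2 s ⟨hs0, hst.le⟩
  have hτR : ∀ s ∈ Set.Icc (0:ℝ) τ, ‖α s‖ ≤ R := by
    intro s hs
    rcases lt_or_eq_of_le hs.2 with hlt | heq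
    · exact hclaim1 s hs.1 hlt
    · rcases eq_or_lt_of_le hτ0 with h0 | h0
      · have : s = 0 := by rw [heq, ← h0]
        rw [this, hα0]; linarith
      · have hsub : Set.Ico (0:ℝ) τ ⊆ Set.Icc 0 T :=
          fun x hx => ⟨hx.1, le_trans hx.2.le hτT⟩
        have hcw : ContinuousWithinAt (fun s => ‖α s‖) (Set.Ico (0:ℝ) τ) τ :=
          ((hαc τ ⟨hτ0, hτT⟩).mono hsub).norm
        have hne : (𝓝[Set.Ico (0:ℝ) τ] τ).NeBot := by
          rw [← mem_closure_iff_nhdsWithin_neBot, closure_Ico h0.ne]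
          exact ⟨hτ0, le_rfl⟩
        have hev : ∀ᶠ x in 𝓝[Set.Ico (0:ℝ) τ] τ, ‖α x‖ ≤ R :=
          eventually_mem_nhdsWithin.mono (fun x hx => hclaim1 x hx.1 hx.2)
        have := le_of_tendsto hcw hev
        rw [heq]; exact this
  -- gronwall bound on [0, τ]
  have hVτ : ∀ t ∈ Set.Icc (0:ℝ) τ, ‖α t‖ ≤ c * M := by
    apply hgron α τ hτT (hαc.mono (fun x hx => ⟨hx.1, le_trans hx.2 hτT⟩)) hα0
    intro t ht
    have hmem : α t + u t ∈ S := hmemS _ _ (hτR t ⟨ht.1, ht.2.le⟩)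
    rw [← hνeq hmem]
    exact hαd' t ⟨ht.1, lt_of_lt_of_le ht.2 hτT⟩
  have hτeq : τ = T := by
    by_contra hne
    have hτlt : τ < T := lt_of_le_of_ne hτT hne
    have hcw := hαc τ ⟨hτ0, hτT⟩
    rw [Metric.continuousWithinAt_iff] at hcw
    obtain ⟨δ, hδ0, hδ⟩ := hcw (1/2) (by norm_num)
    set t' := min T (τ + δ/2) with ht'def
    have hτt' : τ < t' := lt_min hτlt (by linarith)
    have hατ : ‖α τ‖ ≤ c * M := hVτ τ ⟨hτ0, le_rfl⟩
    have ht'A : t' ∈ A := by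
      refine ⟨⟨le_trans hτ0 hτt'.le, min_le_left _ _⟩, fun s hs => ?_⟩
      rcases le_or_gt s τ with h | h
      · exact hτR s ⟨hs.1, h⟩
      · have hsT : s ∈ Set.Icc (0:ℝ) T := ⟨hs.1, le_trans hs.2 (min_le_left _ _)⟩
        have hdist : dist s τ < δ := by
          rw [Real.dist_eq, abs_of_pos (by linarith)]
          have : s ≤ τ + δ/2 := le_trans hs.2 (min_le_right _ _)
          linarith
        have h2 := hδ hsT hdist
        rw [dist_eq_norm] at h2
        have h3 := norm_sub_norm_le (α s) (α τ)
        rw [hRdef]; linarith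
    exact absurd (le_csSup hAbdd ht'A) (not_le.mpr hτt')
  have hball : ∀ t ∈ Set.Icc (0:ℝ) T, ‖α t‖ ≤ c * M := by rw [← hτeq]; exact hVτ
  -- integral form for α
  have hgcont : ContinuousOn (fun s => ν (α s + u s)) (Set.Icc (0:ℝ) T) :=
    hνcont.comp_continuousOn (hαc.add hu.continuousOn)
  have hαint : ∀ t ∈ Set.Icc (0:ℝ) T, α t = ξ + ∫ s in (0:ℝ)..t, ν (α s + u s) := by
    intro t ht
    have hsub : Set.Icc (0:ℝ) t ⊆ Set.Icc 0 T := Set.Icc_subset_Icc le_rfl ht.2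
    have hint : IntervalIntegrable (fun s => ν (α s + u s)) volume 0 t := by
      apply ContinuousOn.intervalIntegrable
      rw [Set.uIcc_of_le ht.1]
      exact hgcont.mono hsub
    have hftc := intervalIntegral.integral_eq_sub_of_hasDeriv_right_of_le ht.1
      (hαc.mono hsub)
      (fun s hs => (hαd' s ⟨hs.1.le, lt_of_lt_of_le hs.2 ht.2⟩).mono Ioi_subset_Ici_self)
      hint
    rw [hftc, hα0]
    abel
  set y : ℝ → Fin d → ℝ := fun t => α t + u t with hydef
  have hyc : ContinuousOn y (Set.Icc (0:ℝ) T) := hαc.add hu.continuousOn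
  have hyint : ∀ t ∈ Set.Icc (0:ℝ) T,
      y t = ξ + (∫ s in (0:ℝ)..t, μ (y s)) + σ.mulVec (w t) := by
    intro t ht
    have h1 : ∫ s in (0:ℝ)..t, μ (y s) = ∫ s in (0:ℝ)..t, ν (α s + u s) := by
      apply intervalIntegral.integral_congr
      intro s hs
      rw [Set.uIcc_of_le ht.1] at hs
      have hsT : s ∈ Set.Icc (0:ℝ) T := Set.Icc_subset_Icc le_rfl ht.2 hs
      exact (hνeq (hmemS _ _ (le_trans (hball s hsT) hcMR))).symm
    have h2 : σ.mulVec (w t) = u t := by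
      rw [hudef]; simp only; rw [hw'eq t ht]
    show α t + u t = ξ + (∫ s in (0:ℝ)..t, μ (y s)) + σ.mulVec (w t)
    rw [h1, h2, ← hαint t ht]
  -- uniqueness
  have huniq : ∀ z : ℝ → (Fin d → ℝ),
      (ContinuousOn z (Set.Icc (0 : ℝ) T) ∧
        ∀ t ∈ Set.Icc (0 : ℝ) T,
          z t = ξ + (∫ s in (0 : ℝ)..t, μ (z s)) + σ.mulVec (w t)) →
      Set.EqOn z y (Set.Icc (0 : ℝ) T) := by
    rintro z ⟨hzc, hzint⟩
    set zE := Set.IccExtend hT ((Set.Icc (0:ℝ) T).restrict z) with hzEdef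
    have hzEc : Continuous zE := (continuousOn_iff_continuous_restrict.mp hzc).Icc_extend'
    have hzEeq : ∀ t ∈ Set.Icc (0:ℝ) T, zE t = z t := fun t ht => by
      rw [hzEdef, Set.IccExtend_of_mem hT _ ht]; rfl
    set G : ℝ → Fin d → ℝ := fun s => μ (zE s) with hGdef
    have hGc : Continuous G := hμcont.comp hzEc
    set X : ℝ → Fin d → ℝ := fun t => ξ + ∫ s in (0:ℝ)..t, G s with hXdef
    have hXd : ∀ t : ℝ, HasDerivAt X (G t) t := by
      intro t
      apply HasDerivAt.const_add
      exact intervalIntegral.integral_hasDerivAt_right (hGc.intervalIntegrable _ _)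
        (hGc.stronglyMeasurableAtFilter _ _) hGc.continuousAt
    have hXc : Continuous X :=
      continuous_iff_continuousAt.mpr fun t => (hXd t).continuousAt
    have hzX : ∀ t ∈ Set.Icc (0:ℝ) T, z t = X t + u t := by
      intro t ht
      rw [hzint t ht]
      have h1 : ∫ s in (0:ℝ)..t, μ (z s) = ∫ s in (0:ℝ)..t, G s := by
        apply intervalIntegral.integral_congr
        intro s hs
        rw [Set.uIcc_of_le ht.1] at hs
        rw [hGdef]; simp only
        rw [hzEeq s (Set.Icc_subset_Icc le_rfl ht.2 hs)]
      have h2 : σ.mulVec (w t) = u t := by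
        rw [hudef]; simp only; rw [hw'eq t ht]
      rw [h1, h2, hXdef]
    have hX0 : X 0 = ξ := by rw [hXdef]; simp
    have hXd' : ∀ t ∈ Set.Ico (0:ℝ) T, HasDerivWithinAt X (μ (X t + u t)) (Set.Ici t) t := by
      intro t ht
      have h1 : G t = μ (X t + u t) := by
        rw [hGdef]; simp only
        rw [hzEeq t ⟨ht.1, ht.2.le⟩, hzX t ⟨ht.1, ht.2.le⟩]
      exact h1 ▸ (hXd t).hasDerivWithinAt
    have hXball : ∀ t ∈ Set.Icc (0:ℝ) T, ‖X t‖ ≤ c * M :=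
      hgron X T le_rfl hXc.continuousOn hX0 hXd'
    have hXν : ∀ t ∈ Set.Ico (0:ℝ) T, HasDerivWithinAt X (ν (X t + u t)) (Set.Ici t) t := by
      intro t ht
      have hmem : X t + u t ∈ S := hmemS _ _ (le_trans (hXball t ⟨ht.1, ht.2.le⟩) hcMR)
      rw [show ν (X t + u t) = μ (X t + u t) from hνeq hmem]
      exact hXd' t ht
    have hXα : Set.EqOn X α (Set.Icc 0 T) :=
      ODE_solution_unique_of_mem_Icc_right
        (v := fun t x => ν (x + u t)) (s := fun _ => Set.univ)
        (fun t _ => (hvlip t).lipschitzOnWith)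
        hXc.continuousOn hXν (fun _ _ => trivial) hαc hαd' (fun _ _ => trivial)
        (hX0.trans hα0.symm)
    intro t ht
    rw [hzX t ht, hydef]; simp only
    rw [hXα ht]
  exact ⟨y, ⟨hyc, hyint⟩, huniq⟩
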